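/- Let H, G₁, G₂ be groups with injective homomorphisms φ₁ : H → G₁ and φ₂ : H → G₂, let G = G₁ *_H G₂ be the amalgamated free product (the pushout of φ₁ and φ₂ in the category of groups) with canonical homomorphisms ι₁ : G₁ → G and ι₂ : G₂ → G. Let ρ₁ : G₁ → SL(2,ℂ) and ρ₂ : G₂ → SL(2,ℂ) be representations such that the restrictions ρ₁∘φ₁ and ρ₂∘φ₂ have the same character (tr ρ₁(φ₁(h)) = tr ρ₂(φ₂(h)) for all h ∈ H) and ρ₁∘φ₁ is irreducible. Then there exists a representation ρ : G → SL(2,ℂ) such that χ_{ρ∘ι₁} = χ_{ρ₁} and χ_{ρ∘ι₂} = χ_{ρ₂}; moreover, any two representations ρ, ρ̃ : G → SL(2,ℂ) with this property have equal characters: tr ρ(g) = tr ρ̃(g) for all g ∈ G. -/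

import Mathlib

/-- `SL(2,ℂ)`. -/
abbrev SL2C := Matrix.SpecialLinearGroup (Fin 2) ℂ

/-- A representation `ρ : G → SL(2,ℂ)` is irreducible if no one-dimensional subspace of `ℂ²`
is invariant under `ρ(g)` for all `g ∈ G`. -/
def IsIrreducibleRep {G : Type*} [Group G] (ρ : G →* SL2C) : Prop :=
  ¬ ∃ p : Submodule ℂ (Fin 2 → ℂ), Module.finrank ℂ p = 1 ∧
      ∀ g : G, ∀ x ∈ p, (ρ g : Matrix (Fin 2) (Fin 2) ℂ).mulVec x ∈ p

/-- The character of a representation: `χ_ρ(g) = tr ρ(g)`. -/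
noncomputable def char {G : Type*} [Group G] (ρ : G →* SL2C) (g : G) : ℂ :=
  Matrix.trace (ρ g : Matrix (Fin 2) (Fin 2) ℂ)

namespace StmtAux

abbrev Mat := Matrix (Fin 2) (Fin 2) ℂ
abbrev V2 := Fin 2 → ℂ

lemma finrank_V2 : Module.finrank ℂ V2 = 2 := by simp

/-- A submodule of `ℂ²` that is neither `⊥` nor `⊤` has finrank 1. -/
lemma rank1 (p : Submodule ℂ V2) (h0 : p ≠ ⊥) (h2 : p ≠ ⊤) : Module.finrank ℂ p = 1 := by
  have hle : Module.finrank ℂ p ≤ 2 := by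
    simpa [finrank_V2] using p.finrank_le
  have hne0 : Module.finrank ℂ p ≠ 0 := fun h => h0 (Submodule.finrank_eq_zero.1 h)
  have hne2 : Module.finrank ℂ p ≠ 2 := by
    intro h
    exact h2 (Submodule.eq_top_of_finrank_eq (by rw [h, finrank_V2]))
  omega

/-- `m ↦ m.mulVec u` as a linear map. -/
noncomputable def appVec (u : V2) : Mat →ₗ[ℂ] V2 where
  toFun m := m.mulVec u
  map_add' a b := Matrix.add_mulVec a b u
  map_smul' c a := Matrix.smul_mulVec c a u

@[simp] lemma appVec_apply (u : V2) (m : Mat) : appVec u m = m.mulVec u := rfl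

lemma eq_zero_of_forall_mulVec {m : Mat} (h : ∀ v : V2, m.mulVec v = 0) : m = 0 := by
  ext i j
  have := congrFun (h (Pi.single j 1)) i
  simpa [Matrix.mulVec_single] using this

lemma matrix_ext_mulVec {a b : Mat} (h : ∀ v : V2, a.mulVec v = b.mulVec v) : a = b := by
  have : a - b = 0 := eq_zero_of_forall_mulVec (fun v => by
    simp [Matrix.sub_mulVec, h v])
  exact sub_eq_zero.1 this

section Schur
open Module

variable {G : Type*} [Group G]

lemma not_invariant_line {ρ : G →* SL2C} (hirr : IsIrreducibleRep ρ)
    (p : Submodule ℂ V2) (h0 : p ≠ ⊥) (h2 : p ≠ ⊤)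
    (hinv : ∀ g : G, ∀ x ∈ p, (ρ g : Mat).mulVec x ∈ p) : False :=
  hirr ⟨p, rank1 p h0 h2, hinv⟩

lemma schur {ρ : G →* SL2C} (hirr : IsIrreducibleRep ρ) (x : Mat)
    (hx : ∀ g : G, x * (ρ g : Mat) = (ρ g : Mat) * x) : ∃ c : ℂ, x = c • (1 : Mat) := by
  obtain ⟨c, hc⟩ := Module.End.exists_eigenvalue (Matrix.mulVecLin x)
  refine ⟨c, ?_⟩
  set p := Module.End.eigenspace (Matrix.mulVecLin x) c with hp
  have h0 : p ≠ ⊥ := hc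
  have hmem : ∀ v ∈ p, x.mulVec v = c • v := by
    intro v hv
    simpa [Matrix.mulVecLin_apply] using (Module.End.mem_eigenspace_iff.1 hv)
  have hinv : ∀ g : G, ∀ v ∈ p, (ρ g : Mat).mulVec v ∈ p := by
    intro g v hv
    rw [hp, Module.End.mem_eigenspace_iff]
    have : x.mulVec ((ρ g : Mat).mulVec v) = (ρ g : Mat).mulVec (x.mulVec v) := by
      rw [Matrix.mulVec_mulVec, Matrix.mulVec_mulVec, hx g]
    simp only [Matrix.mulVecLin_apply, this, hmem v hv, Matrix.mulVec_smul]
  have h2 : p = ⊤ := by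
    by_contra h2
    exact not_invariant_line hirr p h0 h2 hinv
  apply matrix_ext_mulVec
  intro v
  have hv : v ∈ p := h2 ▸ Submodule.mem_top
  rw [hmem v hv]
  rw [Matrix.smul_mulVec, Matrix.one_mulVec]

end Schur

section Burnside

variable {G : Type*} [Group G] (ρ : G →* SL2C)

/-- The linear span of the image of `ρ`. -/
noncomputable def spanRep : Submodule ℂ Mat :=
  Submodule.span ℂ (Set.range fun g : G => (ρ g : Mat))

lemma mem_spanRep (g : G) : (ρ g : Mat) ∈ spanRep ρ :=
  Submodule.subset_span ⟨g, rfl⟩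

lemma one_mem_spanRep : (1 : Mat) ∈ spanRep ρ := by
  have := mem_spanRep ρ 1
  simpa using this

lemma spanRep_mul_left (g : G) {a : Mat} (ha : a ∈ spanRep ρ) :
    (ρ g : Mat) * a ∈ spanRep ρ := by
  induction ha using Submodule.span_induction with
  | mem x hx =>
      obtain ⟨h, rfl⟩ := hx
      have : (ρ g : Mat) * (ρ h : Mat) = (ρ (g * h) : Mat) := by
        simp
      rw [this]; exact mem_spanRep ρ _
  | zero => simp [Submodule.zero_mem]
  | add x y _ _ hx hy => rw [mul_add]; exact Submodule.add_mem _ hx hy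
  | smul c x _ hx => rw [mul_smul_comm]; exact Submodule.smul_mem _ _ hx

end Burnside
section Burnside2

variable {G : Type*} [Group G] {ρ : G →* SL2C}

/-- Step A: for nonzero `u`, `(spanRep ρ) u = ℂ²`. -/
lemma spanRep_map_appVec (hirr : IsIrreducibleRep ρ) {u : V2} (hu : u ≠ 0) :
    (spanRep ρ).map (appVec u) = ⊤ := by
  set q := (spanRep ρ).map (appVec u) with hq
  have huq : u ∈ q := by
    refine ⟨1, one_mem_spanRep ρ, ?_⟩
    simp [Matrix.one_mulVec]
  have h0 : q ≠ ⊥ := by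
    intro h
    rw [h] at huq
    exact hu (by simpa using huq)
  have hinv : ∀ g : G, ∀ x ∈ q, (ρ g : Mat).mulVec x ∈ q := by
    rintro g x ⟨a, ha, rfl⟩
    refine ⟨(ρ g : Mat) * a, spanRep_mul_left ρ g ha, ?_⟩
    simp only [appVec_apply, ← Matrix.mulVec_mulVec]
  by_contra h2
  exact not_invariant_line hirr q h0 h2 hinv

lemma exists_mem_map_eq {A : Submodule ℂ Mat} {u : V2} (h : A.map (appVec u) = ⊤) (w : V2) :
    ∃ a ∈ A, a.mulVec u = w := by
  have : w ∈ A.map (appVec u) := h ▸ Submodule.mem_top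
  obtain ⟨a, ha, haw⟩ := this
  exact ⟨a, ha, haw⟩

lemma span_pair_eq_top {v u : V2} (hv : v ≠ 0) (hdep : ∀ c : ℂ, u ≠ c • v) :
    Submodule.span ℂ ({v, u} : Set V2) = ⊤ := by
  have hli : LinearIndependent ℂ ![u, v] := by
    rw [linearIndependent_fin2]
    refine ⟨by simpa using hv, fun a h => hdep a ?_⟩
    simpa using h.symm
  have hr : Module.finrank ℂ (Submodule.span ℂ (Set.range ![u, v])) = 2 := by
    rw [finrank_span_eq_card hli]; simp
  have hrange : Set.range ![u, v] = ({v, u} : Set V2) := by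
    ext x
    constructor
    · rintro ⟨i, rfl⟩; fin_cases i <;> simp
    · rintro (rfl | rfl)
      · exact ⟨1, rfl⟩
      · exact ⟨0, rfl⟩
  rw [hrange] at hr
  exact Submodule.eq_top_of_finrank_eq (by rw [hr, finrank_V2])

end Burnside2
section Burnside3

variable {G : Type*} [Group G] {ρ : G →* SL2C}

theorem burnside (hirr : IsIrreducibleRep ρ) : spanRep ρ = ⊤ := by
  classical
  set A := spanRep ρ with hA
  set e0 : V2 := Pi.single 0 1 with he0
  have he0ne : e0 ≠ 0 := by
    intro h
    have := congrFun h 0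
    simp [he0] at this
  -- the left ideal L of elements killing e0
  set L := A ⊓ LinearMap.ker (appVec e0) with hL
  -- Step B : L ≠ ⊥
  have hLne : L ≠ ⊥ := by
    intro hbot
    -- then appVec e0 is injective on A, hence finrank A = 2
    set F : A →ₗ[ℂ] V2 := (appVec e0).comp A.subtype with hF
    have hFinj : Function.Injective F := by
      rw [← LinearMap.ker_eq_bot]
      rw [Submodule.eq_bot_iff]
      rintro ⟨a, ha⟩ hker
      have : a ∈ L := ⟨ha, LinearMap.mem_ker.2 hker⟩
      rw [hbot] at this
      simpa using this
    have hFsurj : Function.Surjective F := by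
      intro w
      obtain ⟨a, ha, haw⟩ := exists_mem_map_eq (spanRep_map_appVec hirr he0ne) w
      exact ⟨⟨a, ha⟩, haw⟩
    have hArank : Module.finrank ℂ A = 2 := by
      rw [(LinearEquiv.ofBijective F ⟨hFinj, hFsurj⟩).finrank_eq, finrank_V2]
    -- pick a₁ ∈ A with a₁ e0 ∉ ℂ e0
    have hexa : ∃ a₁ ∈ A, ∀ c : ℂ, a₁.mulVec e0 ≠ c • e0 := by
      by_contra hno
      push_neg at hno
      have hle : A.map (appVec e0) ≤ Submodule.span ℂ {e0} := by
        rintro x ⟨a, ha, rfl⟩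
        obtain ⟨c, hc⟩ := hno a ha
        simp only [appVec_apply]
        rw [hc]
        exact Submodule.smul_mem _ _ (Submodule.mem_span_singleton_self e0)
      rw [spanRep_map_appVec hirr he0ne] at hle
      have : Module.finrank ℂ (Submodule.span ℂ ({e0} : Set V2)) = 1 :=
        finrank_span_singleton he0ne
      have htop : Submodule.span ℂ ({e0} : Set V2) = ⊤ := top_le_iff.1 hle
      rw [htop] at this
      rw [finrank_top, finrank_V2] at this
      norm_num at this
    obtain ⟨a₁, ha₁A, ha₁⟩ := hexa
    -- 1 and a₁ are independent, so A = span {1, a₁}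
    have hBle : Submodule.span ℂ ({(1 : Mat), a₁} : Set Mat) ≤ A := by
      rw [Submodule.span_le]
      rintro x (rfl | rfl)
      · exact one_mem_spanRep ρ
      · exact ha₁A
    have hli : LinearIndependent ℂ ![a₁, (1 : Mat)] := by
      rw [linearIndependent_fin2]
      refine ⟨by simp, fun c h => ?_⟩
      simp only [Matrix.cons_val_one, Matrix.head_cons, Matrix.cons_val_zero] at h
      apply ha₁ c
      rw [← h, Matrix.smul_mulVec, Matrix.one_mulVec]
    have hBrank : Module.finrank ℂ (Submodule.span ℂ ({(1 : Mat), a₁} : Set Mat)) = 2 := by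
      have hrange : Set.range ![a₁, (1 : Mat)] = ({(1 : Mat), a₁} : Set Mat) := by
        ext x
        constructor
        · rintro ⟨i, rfl⟩; fin_cases i <;> simp
        · rintro (rfl | rfl)
          · exact ⟨1, rfl⟩
          · exact ⟨0, rfl⟩
      rw [← hrange, finrank_span_eq_card hli]
      simp
    have hAB : Submodule.span ℂ ({(1 : Mat), a₁} : Set Mat) = A := by
      apply Submodule.eq_of_le_of_finrank_le hBle
      rw [hArank, hBrank]
    -- a₁ has an eigenvector; its line is invariant
    obtain ⟨c, hc⟩ := Module.End.exists_eigenvalue (Matrix.mulVecLin a₁)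
    obtain ⟨w, hw⟩ := hc.exists_hasEigenvector
    have hwne : w ≠ 0 := hw.right
    have hweig : a₁.mulVec w = c • w := by
      simpa [Matrix.mulVecLin_apply] using hw.apply_eq_smul
    apply hirr
    refine ⟨Submodule.span ℂ {w}, finrank_span_singleton hwne, ?_⟩
    intro g x hx
    rw [Submodule.mem_span_singleton] at hx ⊢
    obtain ⟨d, rfl⟩ := hx
    have hgA : (ρ g : Mat) ∈ A := mem_spanRep ρ g
    rw [← hAB] at hgA
    rw [Submodule.mem_span_pair] at hgA
    obtain ⟨s, t, hst⟩ := hgA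
    refine ⟨d * (s + t * c), ?_⟩
    rw [Matrix.mulVec_smul, ← hst]
    rw [Matrix.add_mulVec, Matrix.smul_mulVec, Matrix.smul_mulVec,
      Matrix.one_mulVec, hweig]
    module
  -- Step C : pick a₀ ∈ L nonzero and u with a₀ u ≠ 0
  obtain ⟨a₀, ha₀L, ha₀ne⟩ := Submodule.exists_mem_ne_zero_of_ne_bot hLne
  have ha₀A : a₀ ∈ A := ha₀L.1
  have ha₀e0 : a₀.mulVec e0 = 0 := by simpa using ha₀L.2
  have hexu : ∃ u : V2, a₀.mulVec u ≠ 0 := by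
    by_contra hno
    push_neg at hno
    exact ha₀ne (eq_zero_of_forall_mulVec hno)
  obtain ⟨u, hu⟩ := hexu
  -- Step D : L u = ⊤
  have hLinv : ∀ g : G, ∀ l ∈ L, (ρ g : Mat) * l ∈ L := by
    rintro g l ⟨hlA, hl0⟩
    refine ⟨spanRep_mul_left ρ g hlA, ?_⟩
    have hl0' : l.mulVec e0 = 0 := hl0
    show ((ρ g : Mat) * l).mulVec e0 = 0
    rw [← Matrix.mulVec_mulVec, hl0', Matrix.mulVec_zero]
  have hLu : L.map (appVec u) = ⊤ := by
    set q := L.map (appVec u) with hq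
    have h0 : q ≠ ⊥ := by
      intro h
      have : a₀.mulVec u ∈ q := ⟨a₀, ha₀L, rfl⟩
      rw [h] at this
      exact hu (by simpa using this)
    have hinv : ∀ g : G, ∀ x ∈ q, (ρ g : Mat).mulVec x ∈ q := by
      rintro g x ⟨l, hl, rfl⟩
      exact ⟨(ρ g : Mat) * l, hLinv g l hl, by simp only [appVec_apply, ← Matrix.mulVec_mulVec]⟩
    by_contra h2
    exact not_invariant_line hirr q h0 h2 hinv
  -- Step E : e0 and u span
  have hspan : Submodule.span ℂ ({e0, u} : Set V2) = ⊤ := by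
    apply span_pair_eq_top he0ne
    intro c hc
    apply hu
    rw [hc, Matrix.mulVec_smul, ha₀e0, smul_zero]
  -- Step F : conclude
  set Ψ : Mat →ₗ[ℂ] V2 × V2 := (appVec e0).prod (appVec u) with hΨ
  have hΨinj : Function.Injective Ψ := by
    rw [← LinearMap.ker_eq_bot, Submodule.eq_bot_iff]
    intro m hm
    simp only [LinearMap.mem_ker, hΨ, LinearMap.prod_apply, Function.prod, Prod.mk_eq_zero,
      appVec_apply] at hm
    have hker : Submodule.span ℂ ({e0, u} : Set V2) ≤ LinearMap.ker (Matrix.mulVecLin m) := by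
      rw [Submodule.span_le]
      rintro x (rfl | rfl) <;>
        simp [Matrix.mulVecLin_apply, hm.1, hm.2]
    rw [hspan, top_le_iff] at hker
    apply eq_zero_of_forall_mulVec
    intro v
    have : v ∈ LinearMap.ker (Matrix.mulVecLin m) := hker ▸ Submodule.mem_top
    simpa [Matrix.mulVecLin_apply] using this
  have hΨsurj : A.map Ψ = ⊤ := by
    rw [eq_top_iff]
    rintro ⟨w, z⟩ -
    obtain ⟨a, haA, haw⟩ := exists_mem_map_eq (spanRep_map_appVec hirr he0ne) w
    obtain ⟨l, hlL, hlz⟩ := exists_mem_map_eq hLu (z - a.mulVec u)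
    refine ⟨a + l, A.add_mem haA hlL.1, ?_⟩
    have hl0 : l.mulVec e0 = 0 := by simpa using hlL.2
    simp only [hΨ, LinearMap.prod_apply, Function.prod, appVec_apply, Matrix.add_mulVec]
    rw [haw, hl0, hlz]
    ext : 1 <;> simp only [add_sub_cancel, add_zero]
  have h1 : A = (A.map Ψ).comap Ψ := (Submodule.comap_map_eq_of_injective hΨinj A).symm
  rw [h1, hΨsurj]
  exact Submodule.comap_top Ψ

end Burnside3
section KeyLemma

open Matrix

variable {G : Type*} [Group G]

lemma one_eq_sum_diag : (1 : Mat) = ∑ i : Fin 2, Matrix.single i i (1 : ℂ) := by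
  rw [Fin.sum_univ_two]
  ext p q
  fin_cases p <;> fin_cases q <;> simp [Matrix.single, Matrix.one_apply]

lemma E_mul_E (i a b : Fin 2) (x : Mat) :
    Matrix.single i a (1 : ℂ) * x * Matrix.single b i (1 : ℂ)
      = Matrix.single i i (x a b) := by
  ext p q
  fin_cases i <;> fin_cases a <;> fin_cases b <;> fin_cases p <;> fin_cases q <;>
    simp [Matrix.mul_apply, Matrix.single, Fin.sum_univ_two]

/-- Key lemma: a representation with the same character as an irreducible one is
conjugate to it. -/
theorem conj_of_char_eq (ρ σ : G →* SL2C) (hirr : IsIrreducibleRep ρ)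
    (h : ∀ g : G, Matrix.trace (σ g : Mat) = Matrix.trace (ρ g : Mat)) :
    ∃ P : Matˣ, ∀ g : G, (σ g : Mat) = (P : Mat) * (ρ g : Mat) * ((P⁻¹ : Matˣ) : Mat) := by
  classical
  set S : Submodule ℂ (Mat × Mat) :=
    Submodule.span ℂ (Set.range fun g : G => ((ρ g : Mat), (σ g : Mat))) with hS
  have hgen : ∀ g : G, ((ρ g : Mat), (σ g : Mat)) ∈ S := fun g =>
    Submodule.subset_span ⟨g, rfl⟩
  have hS11 : ((1 : Mat), (1 : Mat)) ∈ S := by simpa using hgen 1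
  -- multiplicative closure
  have hmul : ∀ x ∈ S, ∀ y ∈ S, x * y ∈ S := by
    intro x hx
    induction hx using Submodule.span_induction with
    | mem x hx =>
        obtain ⟨g, rfl⟩ := hx
        intro y hy
        induction hy using Submodule.span_induction with
        | mem y hy =>
            obtain ⟨g', rfl⟩ := hy
            have : ((ρ g : Mat), (σ g : Mat)) * ((ρ g' : Mat), (σ g' : Mat))
                = ((ρ (g * g') : Mat), (σ (g * g') : Mat)) := by
              simp [Prod.mk_mul_mk]
            rw [this]; exact hgen _
        | zero => simp [Submodule.zero_mem]
        | add y z _ _ hy hz => rw [mul_add]; exact S.add_mem hy hz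
        | smul c y _ hy => rw [mul_smul_comm]; exact S.smul_mem _ hy
    | zero => intro y hy; simp [Submodule.zero_mem]
    | add x z _ _ hx hz => intro y hy; rw [add_mul]; exact S.add_mem (hx y hy) (hz y hy)
    | smul c x _ hx => intro y hy; rw [smul_mul_assoc]; exact S.smul_mem _ (hx y hy)
  -- equality of traces on S
  have htr : ∀ x ∈ S, Matrix.trace (x.1 : Mat) = Matrix.trace (x.2 : Mat) := by
    intro x hx
    induction hx using Submodule.span_induction with
    | mem x hx => obtain ⟨g, rfl⟩ := hx; exact (h g).symm
    | zero => simp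
    | add x y _ _ hx hy => simp [Matrix.trace_add, hx, hy]
    | smul c x _ hx => simp [Matrix.trace_smul, hx]
  -- first projection is everything
  have hfst : S.map (LinearMap.fst ℂ Mat Mat) = ⊤ := by
    rw [hS, Submodule.map_span]
    have : (LinearMap.fst ℂ Mat Mat) '' (Set.range fun g : G => ((ρ g : Mat), (σ g : Mat)))
        = Set.range fun g : G => (ρ g : Mat) := by
      rw [← Set.range_comp]; rfl
    rw [this]
    exact burnside hirr
  have hSmem : ∀ m : Mat, ∃ y : Mat, (m, y) ∈ S := by
    intro m
    have : m ∈ S.map (LinearMap.fst ℂ Mat Mat) := hfst ▸ Submodule.mem_top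
    obtain ⟨p, hp, hp1⟩ := this
    exact ⟨p.2, by rwa [show (m, p.2) = p from Prod.ext hp1.symm rfl]⟩
  -- the "kernel on the left" is trivial
  have hK : ∀ x : Mat, (x, (0 : Mat)) ∈ S → x = 0 := by
    intro x hxS
    by_contra hxne
    have hab : ∃ a b : Fin 2, x a b ≠ 0 := by
      by_contra hno
      push_neg at hno
      exact hxne (by ext a b; exact hno a b)
    obtain ⟨a, b, hab⟩ := hab
    have hdiag : ∀ i : Fin 2, ((Matrix.single i i (x a b) : Mat), (0 : Mat)) ∈ S := by
      intro i
      obtain ⟨y, hy⟩ := hSmem (Matrix.single i a (1 : ℂ))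
      obtain ⟨z, hz⟩ := hSmem (Matrix.single b i (1 : ℂ))
      have := hmul _ (hmul _ hy _ hxS) _ hz
      simpa [Prod.mk_mul_mk, E_mul_E] using this
    have h10 : ((1 : Mat), (0 : Mat)) ∈ S := by
      have hsum : ((1 : Mat), (0 : Mat))
          = ∑ i : Fin 2, (x a b)⁻¹ • ((Matrix.single i i (x a b) : Mat), (0 : Mat)) := by
        rw [Fin.sum_univ_two]
        ext : 1
        · show (1 : Mat) = _
          rw [one_eq_sum_diag, Fin.sum_univ_two]
          simp [Matrix.smul_single, inv_mul_cancel₀ hab]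
        · show (0 : Mat) = _
          simp
      rw [hsum]
      exact Submodule.sum_mem _ fun i _ => S.smul_mem _ (hdiag i)
    have h01 : ((0 : Mat), (1 : Mat)) ∈ S := by
      have hmem := S.sub_mem hS11 h10
      have heq : (((1 : Mat), (1 : Mat)) - ((1 : Mat), (0 : Mat)) : Mat × Mat)
          = ((0 : Mat), (1 : Mat)) := by
        rw [Prod.mk_sub_mk]; simp
      rwa [heq] at hmem
    have := htr _ h01
    simp [Matrix.trace_one] at this
  -- rank-nullity: S is the graph of a linear map T
  set F : S →ₗ[ℂ] Mat := (LinearMap.fst ℂ Mat Mat).comp S.subtype with hF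
  set Gm : S →ₗ[ℂ] Mat := (LinearMap.snd ℂ Mat Mat).comp S.subtype with hGm
  have hkerGm : LinearMap.ker Gm = ⊥ := by
    rw [Submodule.eq_bot_iff]
    rintro ⟨⟨x, y⟩, hxy⟩ hk
    have hy : y = 0 := hk
    subst hy
    have hx : x = 0 := hK x hxy
    subst hx
    rfl
  have hrangeF : LinearMap.range F = ⊤ := by
    rw [hF, LinearMap.range_comp, Submodule.range_subtype]
    exact hfst
  have hMat4 : Module.finrank ℂ Mat = 4 := by
    rw [Module.finrank_matrix]
    simp
  have hrnF := LinearMap.finrank_range_add_finrank_ker F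
  have hrnG := LinearMap.finrank_range_add_finrank_ker Gm
  rw [hrangeF, finrank_top] at hrnF
  rw [hkerGm, finrank_bot, add_zero] at hrnG
  have hGle : Module.finrank ℂ (LinearMap.range Gm) ≤ 4 := by
    rw [← hMat4]; exact (LinearMap.range Gm).finrank_le
  have hkerF : LinearMap.ker F = ⊥ := by
    apply Submodule.finrank_eq_zero.1
    omega
  have hFbij : Function.Bijective F :=
    ⟨LinearMap.ker_eq_bot.1 hkerF, LinearMap.range_eq_top.1 hrangeF⟩
  set eF := LinearEquiv.ofBijective F hFbij with heF
  set T : Mat →ₗ[ℂ] Mat := Gm.comp eF.symm.toLinearMap with hT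
  have hgraph : ∀ m : Mat, ((m, T m) : Mat × Mat) ∈ S := by
    intro m
    have h1 : ((eF.symm m : S) : Mat × Mat) ∈ S := (eF.symm m).2
    have h2 : ((eF.symm m : S) : Mat × Mat).1 = m := by
      have := eF.apply_symm_apply m
      exact this
    have h3 : ((eF.symm m : S) : Mat × Mat).2 = T m := rfl
    have heq : ((eF.symm m : S) : Mat × Mat) = (m, T m) := Prod.ext_iff.mpr ⟨h2, h3⟩
    exact heq ▸ h1
  have huniq : ∀ m y : Mat, (m, y) ∈ S → y = T m := by
    intro m y hmy
    have hdiff : (((0 : Mat), y - T m) : Mat × Mat) ∈ S := by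
      have := S.sub_mem hmy (hgraph m)
      simpa [Prod.mk_sub_mk] using this
    have hker : (⟨((0 : Mat), y - T m), hdiff⟩ : S) ∈ LinearMap.ker F := rfl
    rw [hkerF] at hker
    have := congrArg (fun s : S => ((s : Mat × Mat)).2) hker
    simpa [sub_eq_zero] using this
  have hTρ : ∀ g : G, T (ρ g : Mat) = (σ g : Mat) := fun g => (huniq _ _ (hgen g)).symm
  have hT1 : T 1 = 1 := (huniq _ _ hS11).symm
  have hTmul : ∀ m n : Mat, T (m * n) = T m * T n := by
    intro m n
    refine (huniq _ _ ?_).symm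
    have := hmul _ (hgraph m) _ (hgraph n)
    simpa [Prod.mk_mul_mk] using this
  have hTinj : ∀ m : Mat, T m = 0 → m = 0 := by
    intro m hm
    apply hK
    rw [← hm]
    exact hgraph m
  -- build the conjugating matrix
  set e0 : V2 := Pi.single 0 1 with he0
  set col : V2 →ₗ[ℂ] Mat :=
    { toFun := fun x => Matrix.of fun i j => if j = 0 then x i else 0
      map_add' := by intro x y; ext i j; by_cases hj : j = 0 <;> simp [hj]
      map_smul' := by intro c x; ext i j; by_cases hj : j = 0 <;> simp [hj] } with hcol
  have hcolmul : ∀ (m : Mat) (x : V2), m * col x = col (m.mulVec x) := by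
    intro m x
    ext i j
    by_cases hj : j = 0 <;>
      simp [hcol, hj, Matrix.mul_apply, Matrix.mulVec, dotProduct] <;> fin_cases i <;> simp
  have hcole0 : col e0 ≠ 0 := by
    intro hcc
    have := congrFun (congrFun (congrArg (fun mm : Mat => (mm : Fin 2 → Fin 2 → ℂ)) hcc) 0) 0
    simp [hcol, he0] at this
  have hTcole0 : T (col e0) ≠ 0 := fun hcc => hcole0 (hTinj _ hcc)
  have hv₀ : ∃ v : V2, (T (col e0)).mulVec v ≠ 0 := by
    by_contra hno
    push_neg at hno
    exact hTcole0 (eq_zero_of_forall_mulVec hno)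
  obtain ⟨v₀, hv₀⟩ := hv₀
  set Pl : V2 →ₗ[ℂ] V2 := (appVec v₀).comp (T.comp col) with hPl
  have hPle0 : Pl e0 = (T (col e0)).mulVec v₀ := rfl
  have hPlkey : ∀ (m : Mat) (x : V2), Pl (m.mulVec x) = (T m).mulVec (Pl x) := by
    intro m x
    show (T (col (m.mulVec x))).mulVec v₀ = (T m).mulVec ((T (col x)).mulVec v₀)
    rw [← hcolmul, hTmul, Matrix.mulVec_mulVec]
  have hPlinj : Function.Injective Pl := by
    rw [← LinearMap.ker_eq_bot, Submodule.eq_bot_iff]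
    intro w hw
    by_contra hwne
    obtain ⟨i, hi⟩ : ∃ i, w i ≠ 0 := by
      by_contra hno; push_neg at hno; exact hwne (funext hno)
    have hall : ∀ z : V2, Pl z = 0 := by
      intro z
      set m : Mat := Matrix.of fun p q => if q = i then (w i)⁻¹ * z p else 0 with hm
      have hmw : m.mulVec w = z := by
        ext p
        simp only [hm, Matrix.mulVec, dotProduct, Matrix.of_apply, ite_mul, zero_mul]
        rw [Finset.sum_ite_eq' Finset.univ i fun q => (w i)⁻¹ * z p * w q]
        field_simp
        simp
      rw [← hmw, hPlkey]
      have : Pl w = 0 := hw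
      rw [this, Matrix.mulVec_zero]
    exact hv₀ (by rw [← hPle0]; exact hall e0)
  set Pm : Mat := LinearMap.toMatrix' Pl with hPm
  have hPmv : ∀ x : V2, Pm.mulVec x = Pl x := by
    intro x
    rw [hPm, ← Matrix.toLin'_apply, Matrix.toLin'_toMatrix']
  have hPmunit : IsUnit Pm := by
    apply Matrix.mulVec_injective_iff_isUnit.1
    intro x y hxy
    apply hPlinj
    rw [← hPmv, ← hPmv]
    exact hxy
  refine ⟨hPmunit.unit, ?_⟩
  have hPcoe : ((hPmunit.unit : Matˣ) : Mat) = Pm := hPmunit.unit_spec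
  have hconj : ∀ m : Mat, T m * Pm = Pm * m := by
    intro m
    apply matrix_ext_mulVec
    intro x
    rw [← Matrix.mulVec_mulVec, ← Matrix.mulVec_mulVec, hPmv, hPmv, hPlkey]
  intro g
  calc (σ g : Mat) = T (ρ g : Mat) := (hTρ g).symm
    _ = T (ρ g : Mat) * ((hPmunit.unit : Mat) * ((hPmunit.unit⁻¹ : Matˣ) : Mat)) := by
        rw [Units.mul_inv, mul_one]
    _ = (T (ρ g : Mat) * (hPmunit.unit : Mat)) * ((hPmunit.unit⁻¹ : Matˣ) : Mat) := by
        rw [mul_assoc]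
    _ = ((hPmunit.unit : Mat) * (ρ g : Mat)) * ((hPmunit.unit⁻¹ : Matˣ) : Mat) := by
        rw [hPcoe, hconj]
    _ = (hPmunit.unit : Mat) * (ρ g : Mat) * ((hPmunit.unit⁻¹ : Matˣ) : Mat) := rfl

end KeyLemma
section ConjRep

variable {G : Type*} [Group G]

lemma conj_det (P : Matˣ) (x : SL2C) :
    ((P : Mat) * (x : Mat) * ((P⁻¹ : Matˣ) : Mat)).det = 1 := by
  rw [Matrix.det_mul, Matrix.det_mul]
  have h1 : (x : Mat).det = 1 := x.2
  have h2 : (P : Mat).det * ((P⁻¹ : Matˣ) : Mat).det = 1 := by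
    rw [← Matrix.det_mul, Units.mul_inv, Matrix.det_one]
  calc (P : Mat).det * (x : Mat).det * ((P⁻¹ : Matˣ) : Mat).det
      = ((P : Mat).det * ((P⁻¹ : Matˣ) : Mat).det) * (x : Mat).det := by ring
    _ = 1 := by rw [h2, h1, one_mul]

/-- Conjugation of a representation by an invertible matrix. -/
noncomputable def conjRep (P : Matˣ) (ρ : G →* SL2C) : G →* SL2C where
  toFun g := ⟨(P : Mat) * (ρ g : Mat) * ((P⁻¹ : Matˣ) : Mat), conj_det P (ρ g)⟩
  map_one' := by
    apply Subtype.ext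
    show (P : Mat) * ((ρ 1 : SL2C) : Mat) * ((P⁻¹ : Matˣ) : Mat) = ((1 : SL2C) : Mat)
    rw [map_one, Matrix.SpecialLinearGroup.coe_one, mul_one, Units.mul_inv]
  map_mul' g h := by
    apply Subtype.ext
    show (P : Mat) * ((ρ (g * h) : Mat)) * ((P⁻¹ : Matˣ) : Mat)
        = ((P : Mat) * (ρ g : Mat) * ((P⁻¹ : Matˣ) : Mat))
          * ((P : Mat) * (ρ h : Mat) * ((P⁻¹ : Matˣ) : Mat))
    have : (ρ (g * h) : Mat) = (ρ g : Mat) * (ρ h : Mat) := by simp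
    rw [this]
    simp only [mul_assoc]
    rw [← mul_assoc ((P⁻¹ : Matˣ) : Mat) (P : Mat), Units.inv_mul, one_mul]

@[simp] lemma conjRep_coe (P : Matˣ) (ρ : G →* SL2C) (g : G) :
    ((conjRep P ρ g : SL2C) : Mat) = (P : Mat) * (ρ g : Mat) * ((P⁻¹ : Matˣ) : Mat) := rfl

lemma trace_conj (P : Matˣ) (m : Mat) :
    Matrix.trace ((P : Mat) * m * ((P⁻¹ : Matˣ) : Mat)) = Matrix.trace m := by
  rw [Matrix.trace_mul_cycle, Units.inv_mul, one_mul]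

lemma char_conjRep (P : Matˣ) (ρ : G →* SL2C) (g : G) :
    char (conjRep P ρ) g = char ρ g := by
  unfold char
  rw [conjRep_coe, trace_conj]

/-- Irreducibility passes to restrictions along a homomorphism (trivial direction). -/
lemma irr_of_comp {H : Type*} [Group H] {ρ : G →* SL2C} {φ : H →* G}
    (hirr : IsIrreducibleRep (ρ.comp φ)) : IsIrreducibleRep ρ := by
  rintro ⟨p, hp1, hpinv⟩
  exact hirr ⟨p, hp1, fun h x hx => hpinv (φ h) x hx⟩

/-- Irreducibility is preserved by matrix-level conjugation. -/
lemma irr_of_conj {τ τ' : G →* SL2C} (P : Matˣ)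
    (hc : ∀ g : G, (τ g : Mat) = (P : Mat) * (τ' g : Mat) * ((P⁻¹ : Matˣ) : Mat))
    (hirr : IsIrreducibleRep τ') : IsIrreducibleRep τ := by
  rintro ⟨p, hp1, hpinv⟩
  apply hirr
  set f : V2 →ₗ[ℂ] V2 := Matrix.mulVecLin ((P⁻¹ : Matˣ) : Mat) with hf
  set f' : V2 →ₗ[ℂ] V2 := Matrix.mulVecLin (P : Mat) with hf'
  have hff' : ∀ v : V2, f' (f v) = v := by
    intro v
    show (P : Mat).mulVec (((P⁻¹ : Matˣ) : Mat).mulVec v) = v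
    rw [Matrix.mulVec_mulVec, Units.mul_inv, Matrix.one_mulVec]
  have hf'f : ∀ v : V2, f (f' v) = v := by
    intro v
    show ((P⁻¹ : Matˣ) : Mat).mulVec ((P : Mat).mulVec v) = v
    rw [Matrix.mulVec_mulVec, Units.inv_mul, Matrix.one_mulVec]
  refine ⟨p.map f, ?_, ?_⟩
  · have h1 : Module.finrank ℂ (p.map f) ≤ Module.finrank ℂ p := Submodule.finrank_map_le f p
    have hcomp : f'.comp f = LinearMap.id := LinearMap.ext hff'
    have h2 : (p.map f).map f' = p := by
      rw [← Submodule.map_comp, hcomp, Submodule.map_id]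
    have h3 : Module.finrank ℂ p ≤ Module.finrank ℂ (p.map f) :=
      calc Module.finrank ℂ p = Module.finrank ℂ ((p.map f).map f') := by rw [h2]
        _ ≤ Module.finrank ℂ (p.map f) := Submodule.finrank_map_le f' _
    rw [← hp1]
    exact le_antisymm h1 (hp1 ▸ h3)
  · rintro h x ⟨y, hy, rfl⟩
    refine ⟨(τ h : Mat).mulVec y, hpinv h y hy, ?_⟩
    show f ((τ h : Mat).mulVec y) = (τ' h : Mat).mulVec (f y)
    simp only [hf, Matrix.mulVecLin_apply, Matrix.mulVec_mulVec]
    rw [hc h]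
    simp only [mul_assoc]
    rw [← mul_assoc ((P⁻¹ : Matˣ) : Mat) (P : Mat), Units.inv_mul, one_mul]

lemma conj_eq_of_scalar (w v : Matˣ) (c : ℂ) (h : ((w⁻¹ * v : Matˣ) : Mat) = c • 1) :
    ∀ m : Mat, (v : Mat) * m * ((v⁻¹ : Matˣ) : Mat)
      = (w : Mat) * m * ((w⁻¹ : Matˣ) : Mat) := by
  intro m
  set d : Matˣ := w⁻¹ * v with hd
  have hcomm : ∀ z : Mat, (d : Mat) * z = z * (d : Mat) := by
    intro z
    rw [h]
    simp [smul_mul_assoc, mul_smul_comm]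
  have hdconj : (d : Mat) * m * ((d⁻¹ : Matˣ) : Mat) = m := by
    rw [hcomm m, mul_assoc, Units.mul_inv, mul_one]
  have hv : v = w * d := by rw [hd]; group
  calc (v : Mat) * m * ((v⁻¹ : Matˣ) : Mat)
      = ((w * d : Matˣ) : Mat) * m * (((w * d)⁻¹ : Matˣ) : Mat) := by rw [← hv]
    _ = (w : Mat) * ((d : Mat) * m * ((d⁻¹ : Matˣ) : Mat)) * ((w⁻¹ : Matˣ) : Mat) := by
        simp only [Units.val_mul, mul_inv_rev, mul_assoc]
    _ = (w : Mat) * m * ((w⁻¹ : Matˣ) : Mat) := by rw [hdconj]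

end ConjRep
end StmtAux

open StmtAux in
theorem stmt_2 {H G₁ G₂ G : Type} [Group H] [Group G₁] [Group G₂] [Group G]
    (φ₁ : H →* G₁) (φ₂ : H →* G₂)
    (hφ₁ : Function.Injective φ₁) (hφ₂ : Function.Injective φ₂)
    (ι₁ : G₁ →* G) (ι₂ : G₂ →* G)
    (hcomm : ι₁.comp φ₁ = ι₂.comp φ₂)
    (huniv : ∀ (K : Type) [Group K] (f₁ : G₁ →* K) (f₂ : G₂ →* K),
      f₁.comp φ₁ = f₂.comp φ₂ → ∃! f : G →* K, f.comp ι₁ = f₁ ∧ f.comp ι₂ = f₂)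
    (ρ₁ : G₁ →* SL2C) (ρ₂ : G₂ →* SL2C)
    (hchar : ∀ h : H, char ρ₁ (φ₁ h) = char ρ₂ (φ₂ h))
    (hirr : IsIrreducibleRep (ρ₁.comp φ₁)) :
    (∃ ρ : G →* SL2C,
      (∀ g₁ : G₁, char ρ (ι₁ g₁) = char ρ₁ g₁) ∧ (∀ g₂ : G₂, char ρ (ι₂ g₂) = char ρ₂ g₂)) ∧
    (∀ ρ ρ2 : G →* SL2C,
      ((∀ g₁ : G₁, char ρ (ι₁ g₁) = char ρ₁ g₁) ∧ (∀ g₂ : G₂, char ρ (ι₂ g₂) = char ρ₂ g₂)) →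
      ((∀ g₁ : G₁, char ρ2 (ι₁ g₁) = char ρ₁ g₁) ∧ (∀ g₂ : G₂, char ρ2 (ι₂ g₂) = char ρ₂ g₂)) →
      ∀ g : G, char ρ g = char ρ2 g) := by
  have hcommfun : ∀ h : H, ι₁ (φ₁ h) = ι₂ (φ₂ h) := fun h => DFunLike.congr_fun hcomm h
  constructor
  · -- existence
    have hchar' : ∀ h : H,
        Matrix.trace (((ρ₂.comp φ₂) h : SL2C) : Mat)
          = Matrix.trace (((ρ₁.comp φ₁) h : SL2C) : Mat) := fun h => (hchar h).symm
    obtain ⟨P, hP⟩ := conj_of_char_eq (ρ₁.comp φ₁) (ρ₂.comp φ₂) hirr hchar'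
    have hglue : ρ₁.comp φ₁ = (conjRep P⁻¹ ρ₂).comp φ₂ := by
      ext h : 1
      apply Subtype.ext
      show ((ρ₁ (φ₁ h) : SL2C) : Mat) = ((conjRep P⁻¹ ρ₂ (φ₂ h) : SL2C) : Mat)
      rw [conjRep_coe, inv_inv]
      have hPh : ((ρ₂ (φ₂ h) : SL2C) : Mat)
          = (P : Mat) * ((ρ₁ (φ₁ h) : SL2C) : Mat) * ((P⁻¹ : Matˣ) : Mat) := hP h
      rw [hPh]
      simp only [mul_assoc]
      rw [Units.inv_mul, mul_one, Units.inv_mul_cancel_left]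
    obtain ⟨ρ, ⟨hρ1, hρ2⟩, -⟩ := huniv SL2C ρ₁ (conjRep P⁻¹ ρ₂) hglue
    refine ⟨ρ, fun g₁ => ?_, fun g₂ => ?_⟩
    · have h1 : ρ (ι₁ g₁) = ρ₁ g₁ := DFunLike.congr_fun hρ1 g₁
      unfold char
      rw [h1]
    · have h2 : ρ (ι₂ g₂) = conjRep P⁻¹ ρ₂ g₂ := DFunLike.congr_fun hρ2 g₂
      have : char ρ (ι₂ g₂) = char (conjRep P⁻¹ ρ₂) g₂ := by unfold char; rw [h2]
      rw [this, char_conjRep]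
  · -- uniqueness of characters
    rintro ρ ρt ⟨hρ1, hρ2⟩ ⟨hρt1, hρt2⟩
    have hirr₁ : IsIrreducibleRep ρ₁ := irr_of_comp hirr
    obtain ⟨P, hP⟩ := conj_of_char_eq ρ₁ (ρ.comp ι₁) hirr₁ (fun g => hρ1 g)
    obtain ⟨Q, hQ⟩ := conj_of_char_eq ρ₁ (ρt.comp ι₁) hirr₁ (fun g => hρt1 g)
    have hαφ : ∀ h : H, (((ρ.comp ι₂).comp φ₂ h : SL2C) : Mat)
        = (P : Mat) * (((ρ₁.comp φ₁) h : SL2C) : Mat) * ((P⁻¹ : Matˣ) : Mat) := by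
      intro h
      show ((ρ (ι₂ (φ₂ h)) : SL2C) : Mat) = _
      rw [← hcommfun h]
      exact hP (φ₁ h)
    have hαirr : IsIrreducibleRep ((ρ.comp ι₂).comp φ₂) := irr_of_conj P hαφ hirr
    have hαirr' : IsIrreducibleRep (ρ.comp ι₂) := irr_of_comp hαirr
    obtain ⟨R, hR⟩ := conj_of_char_eq (ρ.comp ι₂) (ρt.comp ι₂) hαirr'
      (fun g => by
        have h1 : char ρt (ι₂ g) = char ρ₂ g := hρt2 g
        have h2 : char ρ (ι₂ g) = char ρ₂ g := hρ2 g
        exact h1.trans h2.symm)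
    -- Schur: u := Q⁻¹ R P commutes with the image of ρ₁ ∘ φ₁
    set u : Matˣ := Q⁻¹ * R * P with hu
    have hucomm : ∀ h : H,
        (u : Mat) * (((ρ₁.comp φ₁) h : SL2C) : Mat)
          = (((ρ₁.comp φ₁) h : SL2C) : Mat) * (u : Mat) := by
      intro h
      set A : Mat := ((ρ₁ (φ₁ h) : SL2C) : Mat) with hA
      have hQA : ((ρt (ι₂ (φ₂ h)) : SL2C) : Mat) = (Q : Mat) * A * ((Q⁻¹ : Matˣ) : Mat) := by
        rw [← hcommfun h]; exact hQ (φ₁ h)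
      have hRA : ((ρt (ι₂ (φ₂ h)) : SL2C) : Mat)
          = (R : Mat) * (((ρ (ι₂ (φ₂ h)) : SL2C) : Mat)) * ((R⁻¹ : Matˣ) : Mat) := hR (φ₂ h)
      have hPA : ((ρ (ι₂ (φ₂ h)) : SL2C) : Mat) = (P : Mat) * A * ((P⁻¹ : Matˣ) : Mat) := hαφ h
      have hkey : (R : Mat) * ((P : Mat) * A * ((P⁻¹ : Matˣ) : Mat)) * ((R⁻¹ : Matˣ) : Mat)
          = (Q : Mat) * A * ((Q⁻¹ : Matˣ) : Mat) := by rw [← hPA, ← hRA, hQA]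
      have h2 := congrArg (fun z : Mat => z * ((R : Mat) * (P : Mat))) hkey
      simp only [mul_assoc] at h2
      rw [Units.inv_mul_cancel_left, Units.inv_mul, mul_one] at h2
      have h3 := congrArg (fun z : Mat => ((Q⁻¹ : Matˣ) : Mat) * z) h2
      try simp only at h3
      rw [Units.inv_mul_cancel_left] at h3
      show (u : Mat) * A = A * (u : Mat)
      have hval : (u : Mat) = ((Q⁻¹ : Matˣ) : Mat) * ((R : Mat) * (P : Mat)) := by
        rw [hu]; simp [Units.val_mul, mul_assoc]
      rw [hval, ← mul_assoc]
      simp only [mul_assoc]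
      exact h3
    obtain ⟨c, hc⟩ := schur hirr (u : Mat) hucomm
    set w : Matˣ := Q * P⁻¹ with hw
    have hscal : ((w⁻¹ * R : Matˣ) : Mat) = c • 1 := by
      have hwu : w⁻¹ * R = P * u * P⁻¹ := by rw [hw, hu]; group
      rw [hwu]
      simp only [Units.val_mul]
      rw [hc, mul_smul_comm, smul_mul_assoc, mul_one, Units.mul_inv]
    have hconjeq := conj_eq_of_scalar w R c hscal
    have hfin1 : (conjRep w ρ).comp ι₁ = ρt.comp ι₁ := by
      ext g : 1
      apply Subtype.ext
      show (w : Mat) * (((ρ.comp ι₁) g : SL2C) : Mat) * ((w⁻¹ : Matˣ) : Mat)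
          = (((ρt.comp ι₁) g : SL2C) : Mat)
      rw [hP g, hQ g, hw]
      simp only [mul_inv_rev, inv_inv, Units.val_mul, mul_assoc]
      rw [Units.inv_mul_cancel_left, Units.inv_mul_cancel_left]
    have hfin2 : (conjRep w ρ).comp ι₂ = ρt.comp ι₂ := by
      ext g : 1
      apply Subtype.ext
      show (w : Mat) * (((ρ.comp ι₂) g : SL2C) : Mat) * ((w⁻¹ : Matˣ) : Mat)
          = (((ρt.comp ι₂) g : SL2C) : Mat)
      exact ((hR g).trans (hconjeq _)).symm
    have hcomm2 : (ρt.comp ι₁).comp φ₁ = (ρt.comp ι₂).comp φ₂ := by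
      ext h : 1
      show ρt (ι₁ (φ₁ h)) = ρt (ι₂ (φ₂ h))
      rw [hcommfun h]
    obtain ⟨f, hf, hfuniq⟩ := huniv SL2C (ρt.comp ι₁) (ρt.comp ι₂) hcomm2
    have heq : conjRep w ρ = ρt :=
      (hfuniq _ ⟨hfin1, hfin2⟩).trans (hfuniq ρt ⟨rfl, rfl⟩).symm
    intro g
    have h1 : char (conjRep w ρ) g = char ρt g := by rw [heq]
    rw [← h1, char_conjRep]
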